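/- In a cubical set with connections, for a singular n-cube τ, β ∈ {+,−}, and t ∈ [n]: ∂_{n+1} Σ_{j=1}^{t} (-1)^j Γ_j^β(τ) + Σ_{j=1}^{t} (-1)^j Γ_j^β ∂_n(τ) = (-1)^t Γ_t^β Σ_{j=1}^t (-1)^j (f_j^- − f_j^+)(τ). -/
import Mathlib


structure PrecubicalConn where
  K : ℕ → Type*
  face : Bool → ∀ n : ℕ, ℕ → K (n + 1) → K n
  degen : ∀ n : ℕ, ℕ → K n → K (n + 1)
  conn : Bool → ∀ n : ℕ, ℕ → K n → K (n + 1)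

/-- The axioms of a cubical set with connections (`true` stands for `+`, `false` for `-`;
indices are 1-based with explicit range guards). -/
structure CubicalConnAxioms (P : PrecubicalConn) : Prop where
  face_face : ∀ (α β : Bool) (n i j : ℕ) (σ : P.K (n + 2)), 1 ≤ i → i < j → j ≤ n + 2 →
    P.face α n i (P.face β (n + 1) j σ) = P.face β n (j - 1) (P.face α (n + 1) i σ)
  degen_degen : ∀ (n i j : ℕ) (σ : P.K n), 1 ≤ i → i ≤ j → j ≤ n + 1 →
    P.degen (n + 1) i (P.degen n j σ) = P.degen (n + 1) (j + 1) (P.degen n i σ)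
  face_degen_lt : ∀ (α : Bool) (n i j : ℕ) (σ : P.K (n + 1)), 1 ≤ i → i < j → j ≤ n + 2 →
    P.face α (n + 1) i (P.degen (n + 1) j σ) = P.degen n (j - 1) (P.face α n i σ)
  face_degen_gt : ∀ (α : Bool) (n i j : ℕ) (σ : P.K (n + 1)), 1 ≤ j → j < i → i ≤ n + 2 →
    P.face α (n + 1) i (P.degen (n + 1) j σ) = P.degen n j (P.face α n (i - 1) σ)
  face_degen_eq : ∀ (α : Bool) (n i : ℕ) (σ : P.K n), 1 ≤ i → i ≤ n + 1 →
    P.face α n i (P.degen n i σ) = σ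
  conn_conn : ∀ (α β : Bool) (n i j : ℕ) (σ : P.K n), 1 ≤ i → i ≤ j → j ≤ n →
    P.conn α (n + 1) i (P.conn β n j σ) = P.conn β (n + 1) (j + 1) (P.conn α n i σ)
  conn_degen_lt : ∀ (α : Bool) (n i j : ℕ) (σ : P.K n), 1 ≤ i → i < j → j ≤ n + 1 →
    P.conn α (n + 1) i (P.degen n j σ) = P.degen (n + 1) (j + 1) (P.conn α n i σ)
  conn_degen_gt : ∀ (α : Bool) (n i j : ℕ) (σ : P.K n), 1 ≤ j → j < i → i ≤ n + 1 →
    P.conn α (n + 1) i (P.degen n j σ) = P.degen (n + 1) j (P.conn α n (i - 1) σ)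
  conn_degen_eq : ∀ (α : Bool) (n i : ℕ) (σ : P.K n), 1 ≤ i → i ≤ n + 1 →
    P.conn α (n + 1) i (P.degen n i σ) = P.degen (n + 1) (i + 1) (P.degen n i σ)
  face_conn_lt : ∀ (α β : Bool) (n i j : ℕ) (σ : P.K (n + 1)), 1 ≤ i → i < j → j ≤ n + 1 →
    P.face α (n + 1) i (P.conn β (n + 1) j σ) = P.conn β n (j - 1) (P.face α n i σ)
  face_conn_gt : ∀ (α β : Bool) (n i j : ℕ) (σ : P.K (n + 1)), 1 ≤ j → j + 1 < i → i ≤ n + 2 →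
    P.face α (n + 1) i (P.conn β (n + 1) j σ) = P.conn β n j (P.face α n (i - 1) σ)
  face_conn_self : ∀ (β : Bool) (n i j : ℕ) (σ : P.K n), 1 ≤ j → j ≤ n → (i = j ∨ i = j + 1) →
    P.face β n i (P.conn β n j σ) = σ
  face_conn_opp : ∀ (α β : Bool) (n i j : ℕ) (σ : P.K (n + 1)), 1 ≤ j → j ≤ n + 1 →
    (i = j ∨ i = j + 1) → α ≠ β →
    P.face α (n + 1) i (P.conn β (n + 1) j σ) = P.degen n j (P.face α n j σ)

/-- A cube is degenerate if it is of the form `ε_i f_i^+ σ`. -/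
def PrecubicalConn.Degenerate (P : PrecubicalConn) : ∀ {n : ℕ}, P.K n → Prop :=
  fun {n} σ =>
    match n, σ with
    | 0, _ => False
    | m + 1, σ => ∃ i : ℕ, 1 ≤ i ∧ i ≤ m + 1 ∧ σ = P.degen m i (P.face true m i σ)

/-- A cube is a connection if it lies in the image of some `Γ_i^β`. -/
def PrecubicalConn.IsConn (P : PrecubicalConn) : ∀ {n : ℕ}, P.K n → Prop :=
  fun {n} σ =>
    match n, σ with
    | 0, _ => False
    | m + 1, σ => ∃ (β : Bool) (i : ℕ) (τ : P.K m), 1 ≤ i ∧ i ≤ m ∧ σ = P.conn β m i τ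

/-- The linear extension of the face map `f_i^α` to the free `R`-module on the cubes. -/
noncomputable def Fmap (P : PrecubicalConn) (R : Type*) [CommRing R] (α : Bool) (n i : ℕ) :
    (P.K (n + 1) →₀ R) →ₗ[R] (P.K n →₀ R) :=
  Finsupp.lmapDomain R R (P.face α n i)

/-- The linear extension of the connection map `Γ_i^β` to the free `R`-module on the cubes. -/
noncomputable def Gmap (P : PrecubicalConn) (R : Type*) [CommRing R] (β : Bool) (n i : ℕ) :
    (P.K n →₀ R) →ₗ[R] (P.K (n + 1) →₀ R) :=
  Finsupp.lmapDomain R R (P.conn β n i)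

/-- The cubical boundary operator `∂ σ = ∑_{i=1}^{n+1} (-1)^i (f_i^- σ - f_i^+ σ)`. -/
noncomputable def bdry (P : PrecubicalConn) (R : Type*) [CommRing R] (n : ℕ) :
    (P.K (n + 1) →₀ R) →ₗ[R] (P.K n →₀ R) :=
  ∑ i ∈ Finset.Icc 1 (n + 1), ((-1 : R) ^ i) • (Fmap P R false n i - Fmap P R true n i)

/-- The submodule generated by the degenerate cubes. -/
noncomputable def degenSub (P : PrecubicalConn) (R : Type*) [CommRing R] (n : ℕ) :
    Submodule R (P.K n →₀ R) :=
  Submodule.span R {x | ∃ σ : P.K n, P.Degenerate σ ∧ x = Finsupp.single σ 1}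

/-- The submodule generated by the connection cubes. -/
noncomputable def connSub (P : PrecubicalConn) (R : Type*) [CommRing R] (n : ℕ) :
    Submodule R (P.K n →₀ R) :=
  Submodule.span R {x | ∃ σ : P.K n, P.IsConn σ ∧ x = Finsupp.single σ 1}

/-- The sign `±1` associated to `β ∈ {+,-}`. -/
def sgn (R : Type*) [CommRing R] (β : Bool) : R := if β then 1 else -1


section Aux

variable (P : PrecubicalConn) (R : Type*) [CommRing R] (β : Bool) (n : ℕ) (τ : P.K (n + 1))

/-- `Γ_j (f_i^- τ) - Γ_j (f_i^+ τ)` as a chain. -/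
noncomputable def auxG (j i : ℕ) : P.K (n + 1) →₀ R :=
  Finsupp.single (P.conn β n j (P.face false n i τ)) 1
    - Finsupp.single (P.conn β n j (P.face true n i τ)) 1

/-- `H j = ∑_{i=1}^j (-1)^i auxG j i`. -/
noncomputable def auxH (j : ℕ) : P.K (n + 1) →₀ R :=
  ∑ i ∈ Finset.Icc 1 j, (-1 : R) ^ i • auxG P R β n τ j i

/-- `f_i^- (Γ_j τ) - f_i^+ (Γ_j τ)` as a chain. -/
noncomputable def auxFD (j i : ℕ) : P.K (n + 1) →₀ R :=
  Finsupp.single (P.face false (n + 1) i (P.conn β (n + 1) j τ)) 1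
    - Finsupp.single (P.face true (n + 1) i (P.conn β (n + 1) j τ)) 1

end Aux

lemma Fmap_single' (P : PrecubicalConn) (R : Type*) [CommRing R] (α : Bool) (m i : ℕ)
    (σ : P.K (m + 1)) (r : R) :
    Fmap P R α m i (Finsupp.single σ r) = Finsupp.single (P.face α m i σ) r := by
  simp [Fmap, Finsupp.lmapDomain_apply, Finsupp.mapDomain_single]

lemma Gmap_single' (P : PrecubicalConn) (R : Type*) [CommRing R] (β : Bool) (m i : ℕ)
    (σ : P.K m) (r : R) :
    Gmap P R β m i (Finsupp.single σ r) = Finsupp.single (P.conn β m i σ) r := by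
  simp [Gmap, Finsupp.lmapDomain_apply, Finsupp.mapDomain_single]

lemma bdry_single' (P : PrecubicalConn) (R : Type*) [CommRing R] (m : ℕ) (σ : P.K (m + 1)) :
    bdry P R m (Finsupp.single σ 1) = ∑ i ∈ Finset.Icc 1 (m + 1),
      (-1 : R) ^ i • (Finsupp.single (P.face false m i σ) 1
        - Finsupp.single (P.face true m i σ) 1) := by
  simp [bdry, LinearMap.sum_apply, LinearMap.smul_apply, LinearMap.sub_apply, Fmap_single']

/-- reindexing a shifted Ico sum -/
lemma reidx {M : Type*} [AddCommMonoid M] (a b : ℕ) (g : ℕ → M) :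
    ∑ i ∈ Finset.Ico (a + 1) (b + 1), g i = ∑ i ∈ Finset.Ico a b, g (i + 1) := by
  rw [Finset.sum_Ico_eq_sum_range, Finset.sum_Ico_eq_sum_range]
  have h : b + 1 - (a + 1) = b - a := by omega
  rw [h]
  exact Finset.sum_congr rfl fun k _ => by congr 1; omega

lemma icc_range {M : Type*} [AddCommMonoid M] (N : ℕ) (g : ℕ → M) :
    ∑ j ∈ Finset.Icc 1 N, g j = ∑ k ∈ Finset.range N, g (k + 1) := by
  rw [← Finset.Ico_add_one_right_eq_Icc, Finset.sum_Ico_eq_sum_range]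
  have h : N + 1 - 1 = N := by omega
  rw [h]
  exact Finset.sum_congr rfl fun k _ => by congr 1; omega

/-- The per-`j` computation: the `j`-th term of `∂∑Γ + ∑Γ∂` is `H (j-1) + H j`. -/
lemma per_j (P : PrecubicalConn) (hP : CubicalConnAxioms P)
    (R : Type*) [CommRing R] (n : ℕ) (β : Bool) (τ : P.K (n + 1)) (k : ℕ) (hk : k + 1 ≤ n + 1) :
    (∑ i ∈ Finset.Icc 1 (n + 2), (-1 : R) ^ i • auxFD P R β n τ (k + 1) i)
      + (∑ i ∈ Finset.Icc 1 (n + 1), (-1 : R) ^ i • auxG P R β n τ (k + 1) i)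
      = auxH P R β n τ k + auxH P R β n τ (k + 1) := by
  have hface : ∀ α : Bool, P.face α (n + 1) (k + 1) (P.conn β (n + 1) (k + 1) τ)
      = P.face α (n + 1) (k + 2) (P.conn β (n + 1) (k + 1) τ) := by
    intro α
    by_cases hab : α = β
    · subst hab
      rw [hP.face_conn_self α (n + 1) (k + 1) (k + 1) τ (by omega) (by omega) (Or.inl rfl),
        hP.face_conn_self α (n + 1) (k + 2) (k + 1) τ (by omega) (by omega) (Or.inr rfl)]
    · rw [hP.face_conn_opp α β n (k + 1) (k + 1) τ (by omega) (by omega) (Or.inl rfl) hab,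
        hP.face_conn_opp α β n (k + 2) (k + 1) τ (by omega) (by omega) (Or.inr rfl) hab]
  have hFDmid : auxFD P R β n τ (k + 1) (k + 1) = auxFD P R β n τ (k + 1) (k + 2) := by
    unfold auxFD
    rw [hface false, hface true]
  -- split the first sum
  rw [show Finset.Icc 1 (n + 2) = Finset.Ico 1 (n + 3) from (Finset.Ico_add_one_right_eq_Icc 1 (n+2)).symm]
  rw [← Finset.sum_Ico_consecutive (fun i => (-1 : R) ^ i • auxFD P R β n τ (k + 1) i)
    (show 1 ≤ k + 1 by omega) (show k + 1 ≤ n + 3 by omega)]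
  rw [Finset.sum_eq_sum_Ico_succ_bot (show k + 1 < n + 3 by omega)]
  rw [Finset.sum_eq_sum_Ico_succ_bot (show k + 2 < n + 3 by omega)]
  -- head of the first sum is H k
  have hhead : ∑ i ∈ Finset.Ico 1 (k + 1), (-1 : R) ^ i • auxFD P R β n τ (k + 1) i
      = auxH P R β n τ k := by
    rw [auxH, ← Finset.Ico_add_one_right_eq_Icc]
    refine Finset.sum_congr rfl fun i hi => ?_
    rw [Finset.mem_Ico] at hi
    congr 1
    unfold auxFD auxG
    rw [hP.face_conn_lt false β n i (k + 1) τ (by omega) (by omega) (by omega),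
      hP.face_conn_lt true β n i (k + 1) τ (by omega) (by omega) (by omega)]
    norm_num
  -- middle terms cancel
  have hmid : (-1 : R) ^ (k + 1) • auxFD P R β n τ (k + 1) (k + 1)
      + (-1 : R) ^ (k + 2) • auxFD P R β n τ (k + 1) (k + 2) = 0 := by
    rw [← hFDmid, ← add_smul]
    have h0 : (-1 : R) ^ (k + 1) + (-1 : R) ^ (k + 2) = 0 := by
      rw [pow_succ (-1 : R) (k + 1)]; ring
    rw [h0, zero_smul]
  -- tail of the first sum
  have htail : ∑ i ∈ Finset.Ico (k + 3) (n + 3), (-1 : R) ^ i • auxFD P R β n τ (k + 1) i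
      = - ∑ i ∈ Finset.Ico (k + 2) (n + 2), (-1 : R) ^ i • auxG P R β n τ (k + 1) i := by
    rw [reidx (k + 2) (n + 2)]
    rw [← Finset.sum_neg_distrib]
    refine Finset.sum_congr rfl fun i hi => ?_
    rw [Finset.mem_Ico] at hi
    have hFG : auxFD P R β n τ (k + 1) (i + 1) = auxG P R β n τ (k + 1) i := by
      unfold auxFD auxG
      rw [hP.face_conn_gt false β n (i + 1) (k + 1) τ (by omega) (by omega) (by omega),
        hP.face_conn_gt true β n (i + 1) (k + 1) τ (by omega) (by omega) (by omega)]
      norm_num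
    rw [hFG, pow_succ]
    module
  -- split the second sum
  have hsplit2 : ∑ i ∈ Finset.Icc 1 (n + 1), (-1 : R) ^ i • auxG P R β n τ (k + 1) i
      = auxH P R β n τ (k + 1)
        + ∑ i ∈ Finset.Ico (k + 2) (n + 2), (-1 : R) ^ i • auxG P R β n τ (k + 1) i := by
    rw [show Finset.Icc 1 (n + 1) = Finset.Ico 1 (n + 2) from (Finset.Ico_add_one_right_eq_Icc 1 (n+1)).symm]
    rw [← Finset.sum_Ico_consecutive (fun i => (-1 : R) ^ i • auxG P R β n τ (k + 1) i)
      (show 1 ≤ k + 2 by omega) (show k + 2 ≤ n + 2 by omega)]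
    congr 1
  rw [hhead, htail, hsplit2]
  have hm' : (-1 : R) ^ (k + 1) • auxFD P R β n τ (k + 1) (k + 1)
      = -((-1 : R) ^ (k + 2) • auxFD P R β n τ (k + 1) (k + 2)) :=
    eq_neg_of_add_eq_zero_left hmid
  rw [hm']
  abel

/-- Corollary 3.3(iii): for `t ∈ [n]`, in the non-degenerate chain complex,
`∂ ∑_{j=1}^{t} (-1)^j Γ_j^β τ + ∑_{j=1}^{t} (-1)^j Γ_j^β ∂ τ
  = (-1)^t Γ_t^β ∑_{j=1}^{t} (-1)^j (f_j^- - f_j^+) τ`. -/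
theorem alternating_conn_sum_identity (P : PrecubicalConn) (hP : CubicalConnAxioms P)
    (R : Type*) [CommRing R] (n t : ℕ) (β : Bool) (τ : P.K (n + 1))
    (ht1 : 1 ≤ t) (ht2 : t ≤ n + 1) :
    (bdry P R (n + 1) (∑ j ∈ Finset.Icc 1 t,
          ((-1 : R) ^ j) • Finsupp.single (P.conn β (n + 1) j τ) 1)
        + ∑ j ∈ Finset.Icc 1 t,
          ((-1 : R) ^ j) • Gmap P R β n j (bdry P R n (Finsupp.single τ 1)))
      - ((-1 : R) ^ t • Gmap P R β n t (∑ j ∈ Finset.Icc 1 t,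
          ((-1 : R) ^ j) • ((Fmap P R false n j - Fmap P R true n j) (Finsupp.single τ 1))))
      ∈ degenSub P R (n + 1) := by
  classical
  have h1 : bdry P R (n + 1) (∑ j ∈ Finset.Icc 1 t,
        ((-1 : R) ^ j) • Finsupp.single (P.conn β (n + 1) j τ) 1)
      = ∑ j ∈ Finset.Icc 1 t, (-1 : R) ^ j •
          ∑ i ∈ Finset.Icc 1 (n + 2), (-1 : R) ^ i • auxFD P R β n τ j i := by
    rw [map_sum]
    refine Finset.sum_congr rfl fun j _ => ?_
    rw [map_smul, bdry_single']
    rfl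
  have h2 : ∀ j : ℕ, Gmap P R β n j (bdry P R n (Finsupp.single τ 1))
      = ∑ i ∈ Finset.Icc 1 (n + 1), (-1 : R) ^ i • auxG P R β n τ j i := by
    intro j
    rw [bdry_single', map_sum]
    refine Finset.sum_congr rfl fun i _ => ?_
    rw [map_smul, map_sub, Gmap_single', Gmap_single']
    rfl
  have h3 : Gmap P R β n t (∑ j ∈ Finset.Icc 1 t,
        ((-1 : R) ^ j) • ((Fmap P R false n j - Fmap P R true n j) (Finsupp.single τ 1)))
      = auxH P R β n τ t := by
    rw [map_sum]
    unfold auxH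
    refine Finset.sum_congr rfl fun j _ => ?_
    rw [map_smul]
    congr 1
    rw [LinearMap.sub_apply, Fmap_single', Fmap_single', map_sub, Gmap_single', Gmap_single']
    rfl
  have h4 : ∑ k ∈ Finset.range t,
        (-1 : R) ^ (k + 1) • (auxH P R β n τ k + auxH P R β n τ (k + 1))
      = (-1 : R) ^ t • auxH P R β n τ t := by
    have e : ∀ k ∈ Finset.range t,
        (-1 : R) ^ (k + 1) • (auxH P R β n τ k + auxH P R β n τ (k + 1))
        = (fun m => (-1 : R) ^ m • auxH P R β n τ m) (k + 1)
          - (fun m => (-1 : R) ^ m • auxH P R β n τ m) k := by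
      intro k _
      simp only
      rw [smul_add, pow_succ]
      module
    rw [Finset.sum_congr rfl e,
      Finset.sum_range_sub (fun m => (-1 : R) ^ m • auxH P R β n τ m) t]
    have h0 : auxH P R β n τ 0 = 0 := by simp [auxH]
    simp [h0]
  have h5 : ∑ j ∈ Finset.Icc 1 t, ((-1 : R) ^ j •
          ∑ i ∈ Finset.Icc 1 (n + 2), (-1 : R) ^ i • auxFD P R β n τ j i
        + (-1 : R) ^ j • ∑ i ∈ Finset.Icc 1 (n + 1), (-1 : R) ^ i • auxG P R β n τ j i)
      = (-1 : R) ^ t • auxH P R β n τ t := by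
    rw [icc_range, ← h4]
    refine Finset.sum_congr rfl fun k hk => ?_
    have hkt : k < t := Finset.mem_range.mp hk
    rw [← smul_add, per_j P hP R n β τ k (by omega)]
  rw [h1, h3]
  simp only [h2]
  rw [← Finset.sum_add_distrib, h5, sub_self]
  exact Submodule.zero_mem _
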